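/- Let V be a complex Hilbert space and let (P_n), n ∈ ℕ, be a sequence of pairwise commuting orthogonal projections (continuous linear, idempotent, selfadjoint operators) on V. Then there exists a map P assigning to each Borel subset X of 2^ω a continuous linear operator P(X) on V such that: (i) each P(X) is idempotent and selfadjoint; (ii) any two values P(X), P(Y) commute; (iii) P(2^ω) is the identity operator; (iv) P(Xᶜ) = 1 − P(X) for every Borel X; (v) P(X ∩ Y) = P(X) ∘ P(Y) for all Borel X, Y; (vi) for every sequence (X_n) of pairwise disjoint Borel sets and every ψ ∈ V, P(⋃_n X_n)ψ = ∑_n P(X_n)ψ with convergence in norm; and (vii) P({f ∈ 2^ω | f(n) = true}) = P_n for each n ∈ ℕ. -/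

import Mathlib

set_option maxHeartbeats 1000000
open Filter MeasureTheory Set
open scoped ENNReal NNReal symmDiff Topology Classical
noncomputable section
namespace PVMAux


/-- `X` is determined by coordinates `< N`. -/
def Det (N : ℕ) (X : Set (ℕ → Bool)) : Prop :=
  ∀ f g : ℕ → Bool, (∀ i < N, f i = g i) → f ∈ X → g ∈ X

/-- The algebra of finitely-determined (cylinder/clopen) sets. -/
def 𝒜 : Set (Set (ℕ → Bool)) := {X | ∃ N, Det N X}

lemma Det.mono {N M : ℕ} (h : N ≤ M) {X : Set (ℕ → Bool)} (hX : Det N X) : Det M X :=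
  fun f g hfg => hX f g (fun i hi => hfg i (lt_of_lt_of_le hi h))

lemma Det.compl {N : ℕ} {X : Set (ℕ → Bool)} (hX : Det N X) : Det N Xᶜ := by
  intro f g hfg hf hg
  exact hf (hX g f (fun i hi => (hfg i hi).symm) hg)

lemma Det.inter {N : ℕ} {X Y : Set (ℕ → Bool)} (hX : Det N X) (hY : Det N Y) :
    Det N (X ∩ Y) := fun f g hfg hf => ⟨hX f g hfg hf.1, hY f g hfg hf.2⟩

lemma Det.union {N : ℕ} {X Y : Set (ℕ → Bool)} (hX : Det N X) (hY : Det N Y) :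
    Det N (X ∪ Y) := fun f g hfg hf =>
  hf.elim (fun h => Or.inl (hX f g hfg h)) (fun h => Or.inr (hY f g hfg h))

lemma det_univ (N : ℕ) : Det N (univ : Set (ℕ → Bool)) := fun _ _ _ h => h
lemma det_empty (N : ℕ) : Det N (∅ : Set (ℕ → Bool)) := fun _ _ _ h => h

lemma Det.symmDiff {N : ℕ} {X Y : Set (ℕ → Bool)} (hX : Det N X) (hY : Det N Y) :
    Det N (X ∆ Y) := by
  rw [Set.symmDiff_def]
  exact (hX.inter hY.compl).union (hY.inter hX.compl)

lemma isSetAlgebra_𝒜 : IsSetAlgebra 𝒜 where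
  empty_mem := ⟨0, det_empty 0⟩
  compl_mem := fun s ⟨N, h⟩ => ⟨N, h.compl⟩
  union_mem := fun {s t} ⟨N, hs⟩ ⟨M, ht⟩ =>
    ⟨max N M, (hs.mono (le_max_left _ _)).union (ht.mono (le_max_right _ _))⟩

lemma mem_𝒜_inter {X Y : Set (ℕ → Bool)} (hX : X ∈ 𝒜) (hY : Y ∈ 𝒜) : X ∩ Y ∈ 𝒜 :=
  isSetAlgebra_𝒜.inter_mem hX hY

/-- restriction to the first `N` coordinates -/
def res (N : ℕ) (f : ℕ → Bool) : Fin N → Bool := fun i => f i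

lemma continuous_res (N : ℕ) : Continuous (res N) :=
  continuous_pi (fun i => continuous_apply (i : ℕ))

lemma Det.eq_preimage {N : ℕ} {X : Set (ℕ → Bool)} (hX : Det N X) :
    X = res N ⁻¹' (res N '' X) := by
  ext f
  constructor
  · exact fun hf => ⟨f, hf, rfl⟩
  · rintro ⟨g, hg, hfg⟩
    refine hX g f (fun i hi => ?_) hg
    have := congrFun hfg ⟨i, hi⟩
    exact this

lemma Det.isOpen {N : ℕ} {X : Set (ℕ → Bool)} (hX : Det N X) : IsOpen X := by
  rw [hX.eq_preimage]
  exact (isOpen_discrete _).preimage (continuous_res N)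

lemma Det.isClosed {N : ℕ} {X : Set (ℕ → Bool)} (hX : Det N X) : IsClosed X := by
  have := hX.compl.isOpen
  simpa [isClosed_compl_iff] using this.isClosed_compl

lemma Det.isCompact {N : ℕ} {X : Set (ℕ → Bool)} (hX : Det N X) : IsCompact X :=
  hX.isClosed.isCompact

lemma Det.measurableSet {N : ℕ} {X : Set (ℕ → Bool)} (hX : Det N X) : MeasurableSet X :=
  hX.isOpen.measurableSet

lemma mem_𝒜_measurableSet {X : Set (ℕ → Bool)} (hX : X ∈ 𝒜) : MeasurableSet X := by
  obtain ⟨N, hN⟩ := hX; exact hN.measurableSet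

lemma generateFrom_𝒜 :
    (inferInstance : MeasurableSpace (ℕ → Bool)) = MeasurableSpace.generateFrom 𝒜 := by
  refine le_antisymm ?_ ?_
  · rw [show (inferInstance : MeasurableSpace (ℕ → Bool)) = MeasurableSpace.pi from rfl]
    refine iSup_le fun i => ?_
    intro s hs
    rcases hs with ⟨t, -, rfl⟩
    refine MeasurableSpace.measurableSet_generateFrom ⟨i + 1, ?_⟩
    intro f g hfg hf
    have : f i = g i := hfg i (Nat.lt_succ_self i)
    simpa [Set.mem_preimage, ← this] using hf
  · exact MeasurableSpace.generateFrom_le fun X hX => mem_𝒜_measurableSet hX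

/-- the `N`-saturation of a set -/
def satur (N : ℕ) (K : Set (ℕ → Bool)) : Set (ℕ → Bool) :=
  {f | ∃ g ∈ K, ∀ i < N, f i = g i}

lemma subset_satur (N : ℕ) (K : Set (ℕ → Bool)) : K ⊆ satur N K :=
  fun f hf => ⟨f, hf, fun _ _ => rfl⟩

lemma det_satur (N : ℕ) (K : Set (ℕ → Bool)) : Det N (satur N K) := by
  rintro f g hfg ⟨h, hh, hfh⟩
  exact ⟨h, hh, fun i hi => (hfg i hi).symm.trans (hfh i hi)⟩

lemma satur_mono {K L : Set (ℕ → Bool)} (N : ℕ) (h : K ⊆ L) : satur N K ⊆ satur N L := by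
  rintro f ⟨g, hg, hfg⟩; exact ⟨g, h hg, hfg⟩

lemma satur_anti {N M : ℕ} (h : N ≤ M) (K : Set (ℕ → Bool)) : satur M K ⊆ satur N K := by
  rintro f ⟨g, hg, hfg⟩; exact ⟨g, hg, fun i hi => hfg i (lt_of_lt_of_le hi h)⟩

lemma satur_union (N : ℕ) (K L : Set (ℕ → Bool)) :
    satur N (K ∪ L) = satur N K ∪ satur N L := by
  ext f
  constructor
  · rintro ⟨g, hg | hg, hfg⟩
    · exact Or.inl ⟨g, hg, hfg⟩
    · exact Or.inr ⟨g, hg, hfg⟩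
  · rintro (⟨g, hg, hfg⟩ | ⟨g, hg, hfg⟩)
    · exact ⟨g, Or.inl hg, hfg⟩
    · exact ⟨g, Or.inr hg, hfg⟩

lemma Det.satur_eq {N : ℕ} {X : Set (ℕ → Bool)} (hX : Det N X) : satur N X = X := by
  refine subset_antisymm ?_ (subset_satur N X)
  rintro f ⟨g, hg, hfg⟩
  exact hX g f (fun i hi => (hfg i hi).symm) hg

/-- Disjoint compact sets have disjoint saturations at some level. -/
lemma exists_satur_disjoint {K L : Set (ℕ → Bool)} (hK : IsCompact K) (hL : IsCompact L)
    (h : Disjoint K L) : ∃ N, satur N K ∩ satur N L = ∅ := by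
  by_contra hcon
  push_neg at hcon
  have hne : ∀ N, (((K ×ˢ L) : Set ((ℕ → Bool) × (ℕ → Bool))) ∩
      {p | ∀ i < N, p.1 i = p.2 i}).Nonempty := by
    intro N
    obtain ⟨f, ⟨g, hg, hfg⟩, ⟨g', hg', hfg'⟩⟩ := hcon N
    exact ⟨(g, g'), ⟨hg, hg'⟩, fun i hi => ((hfg i hi).symm.trans (hfg' i hi))⟩
  set t : ℕ → Set ((ℕ → Bool) × (ℕ → Bool)) :=
    fun N => ((K ×ˢ L) ∩ {p | ∀ i < N, p.1 i = p.2 i}) with ht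
  have hclosed : ∀ N, IsClosed (t N) := by
    intro N
    refine (hK.isClosed.prod hL.isClosed).inter ?_
    have : {p : (ℕ → Bool) × (ℕ → Bool) | ∀ i < N, p.1 i = p.2 i} =
        ⋂ (i : ℕ) (_ : i < N), {p | p.1 i = p.2 i} := by
      ext p; simp
    rw [this]
    refine isClosed_iInter fun i => isClosed_iInter fun _ => ?_
    exact isClosed_eq ((continuous_apply i).comp continuous_fst)
      ((continuous_apply i).comp continuous_snd)
  have hcompact : ∀ N, IsCompact (t N) := fun N => (hclosed N).isCompact
  have hdir : Directed (· ⊇ ·) t := by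
    intro N M
    refine ⟨max N M, ?_, ?_⟩ <;>
      exact fun p hp => ⟨hp.1, fun i hi => hp.2 i (lt_of_lt_of_le hi (by simp))⟩
  obtain ⟨p, hp⟩ := IsCompact.nonempty_iInter_of_directed_nonempty_isCompact_isClosed
    t hdir hne hcompact hclosed
  have : p.1 = p.2 := by
    funext i
    have := Set.mem_iInter.1 hp (i + 1)
    exact this.2 i (Nat.lt_succ_self i)
  have hp0 := Set.mem_iInter.1 hp 0
  exact absurd (h.ne_of_mem hp0.1.1 hp0.1.2) (by simp [this])




/-- slice of a set -/
def sl (n : ℕ) (b : Bool) (X : Set (ℕ → Bool)) : Set (ℕ → Bool) :=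
  {f | Function.update f n b ∈ X}

lemma sl_inter (n : ℕ) (b : Bool) (X Y : Set (ℕ → Bool)) :
    sl n b (X ∩ Y) = sl n b X ∩ sl n b Y := rfl
lemma sl_union (n : ℕ) (b : Bool) (X Y : Set (ℕ → Bool)) :
    sl n b (X ∪ Y) = sl n b X ∪ sl n b Y := rfl
lemma sl_univ (n : ℕ) (b : Bool) : sl n b (univ : Set (ℕ → Bool)) = univ := rfl
lemma sl_empty (n : ℕ) (b : Bool) : sl n b (∅ : Set (ℕ → Bool)) = ∅ := rfl

variable {V : Type*} [NormedAddCommGroup V] [InnerProductSpace ℂ V] [CompleteSpace V]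

/-- A commuting family of orthogonal projections. -/
structure PFam (V : Type*) [NormedAddCommGroup V] [InnerProductSpace ℂ V]
    [CompleteSpace V] where
  P : ℕ → V →L[ℂ] V
  idem : ∀ n, P n * P n = P n
  sa : ∀ n, IsSelfAdjoint (P n)
  comm : ∀ m n, P m * P n = P n * P m

variable (F : PFam V)

/-- basic projections -/
def Rop (n : ℕ) (b : Bool) : V →L[ℂ] V := if b then F.P n else 1 - F.P n

lemma Rop_comm (m n : ℕ) (b b' : Bool) : Commute (Rop F m b) (Rop F n b') := by
  have h : Commute (F.P m) (F.P n) := F.comm m n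
  have h1 : Commute (1 - F.P m) (F.P n) := (Commute.one_left _).sub_left h
  have h2 : Commute (F.P m) (1 - F.P n) := (Commute.one_right _).sub_right h
  have h3 : Commute (1 - F.P m) (1 - F.P n) := (Commute.one_right _).sub_right h1
  cases b <;> cases b' <;> simpa [Rop] using (by assumption : _)

lemma Rop_sa (n : ℕ) (b : Bool) : IsSelfAdjoint (Rop F n b) := by
  cases b <;> simp only [Rop, if_true, if_false, Bool.false_eq_true]
  · exact (IsSelfAdjoint.one (V →L[ℂ] V)).sub (F.sa n)
  · exact F.sa n

lemma Rop_mul_self (n : ℕ) (b : Bool) : Rop F n b * Rop F n b = Rop F n b := by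
  cases b <;> simp only [Rop, if_true, if_false, Bool.false_eq_true]
  · have := F.idem n
    simp only [sub_mul, mul_sub, one_mul, mul_one, this]
    abel
  · exact F.idem n

lemma Rop_mul_other (n : ℕ) (b : Bool) : Rop F n b * Rop F n (!b) = 0 := by
  have h := F.idem n
  cases b <;> simp only [Rop, Bool.not_true, Bool.not_false, if_true, if_false,
    Bool.false_eq_true] <;>
    simp only [sub_mul, mul_sub, one_mul, mul_one, h, sub_self]

lemma Rop_add_other (n : ℕ) (b : Bool) : Rop F n b + Rop F n (!b) = 1 := by
  cases b <;> simp [Rop] <;> abel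

/-- level-`N` cylinder operator of a set -/
noncomputable def QS : ℕ → Set (ℕ → Bool) → (V →L[ℂ] V)
  | 0, X => if (fun _ => false) ∈ X then 1 else 0
  | (N + 1), X => QS N (sl N false X) * Rop F N false + QS N (sl N true X) * Rop F N true

lemma QS_comm_Rop (m : ℕ) (b : Bool) : ∀ (N : ℕ) (X : Set (ℕ → Bool)),
    Commute (Rop F m b) (QS F N X) := by
  intro N
  induction N with
  | zero =>
    intro X
    by_cases h : (fun _ => false) ∈ X <;> simp [QS, h]
  | succ N ih =>
    intro X
    exact ((ih _).mul_right (Rop_comm F m N b false)).add_right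
      ((ih _).mul_right (Rop_comm F m N b true))

lemma QS_univ : ∀ N, QS F N (univ : Set (ℕ → Bool)) = 1 := by
  intro N
  induction N with
  | zero => simp [QS]
  | succ N ih =>
    show QS F N (sl N false univ) * _ + QS F N (sl N true univ) * _ = 1
    rw [sl_univ, sl_univ, ih, one_mul, one_mul]
    simpa using Rop_add_other F N false

lemma QS_empty : ∀ N, QS F N (∅ : Set (ℕ → Bool)) = 0 := by
  intro N
  induction N with
  | zero => simp [QS]
  | succ N ih =>
    show QS F N (sl N false ∅) * _ + QS F N (sl N true ∅) * _ = 0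
    rw [sl_empty, sl_empty, ih, zero_mul, zero_mul, add_zero]

lemma QS_mul : ∀ (N : ℕ) (X Y : Set (ℕ → Bool)),
    QS F N X * QS F N Y = QS F N (X ∩ Y) := by
  intro N
  induction N with
  | zero =>
    intro X Y
    by_cases hX : (fun _ => false) ∈ X <;> by_cases hY : (fun _ => false) ∈ Y <;>
      simp [QS, hX, hY, Set.mem_inter_iff]
  | succ N ih =>
    intro X Y
    show (QS F N (sl N false X) * Rop F N false + QS F N (sl N true X) * Rop F N true) *
        (QS F N (sl N false Y) * Rop F N false + QS F N (sl N true Y) * Rop F N true) = _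
    have key : ∀ b b' : Bool, (QS F N (sl N b X) * Rop F N b) * (QS F N (sl N b' Y) * Rop F N b')
        = (QS F N (sl N b X) * QS F N (sl N b' Y)) * (Rop F N b * Rop F N b') := by
      intro b b'
      simp only [mul_assoc]
      rw [← mul_assoc (Rop F N b) (QS F N (sl N b' Y)), (QS_comm_Rop F N b N (sl N b' Y)).eq,
        mul_assoc]
    rw [add_mul, mul_add, mul_add, key, key, key, key]
    rw [show Rop F N false * Rop F N true = 0 by simpa using Rop_mul_other F N false,
        show Rop F N true * Rop F N false = 0 by simpa using Rop_mul_other F N true,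
        Rop_mul_self, Rop_mul_self]
    simp only [mul_zero, add_zero, zero_add]
    rw [ih, ih, ← sl_inter, ← sl_inter]
    rfl

lemma QS_add : ∀ (N : ℕ) (X Y : Set (ℕ → Bool)),
    QS F N (X ∪ Y) + QS F N (X ∩ Y) = QS F N X + QS F N Y := by
  intro N
  induction N with
  | zero =>
    intro X Y
    by_cases hX : (fun _ => false) ∈ X <;> by_cases hY : (fun _ => false) ∈ Y <;>
      simp [QS, hX, hY, Set.mem_inter_iff, Set.mem_union] <;> abel
  | succ N ih =>
    intro X Y
    show QS F N (sl N false (X ∪ Y)) * _ + QS F N (sl N true (X ∪ Y)) * _ +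
        (QS F N (sl N false (X ∩ Y)) * _ + QS F N (sl N true (X ∩ Y)) * _) = _
    rw [sl_union, sl_union, sl_inter, sl_inter]
    have e : ∀ b : Bool,
        QS F N (sl N b X ∪ sl N b Y) * Rop F N b + QS F N (sl N b X ∩ sl N b Y) * Rop F N b
        = QS F N (sl N b X) * Rop F N b + QS F N (sl N b Y) * Rop F N b := by
      intro b
      rw [← add_mul, ← add_mul, ih]
    show _ = QS F N (sl N false X) * _ + QS F N (sl N true X) * _ +
        (QS F N (sl N false Y) * _ + QS F N (sl N true Y) * _)
    have := e false
    have := e true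
    calc QS F N (sl N false X ∪ sl N false Y) * Rop F N false +
          QS F N (sl N true X ∪ sl N true Y) * Rop F N true +
          (QS F N (sl N false X ∩ sl N false Y) * Rop F N false +
          QS F N (sl N true X ∩ sl N true Y) * Rop F N true)
        = (QS F N (sl N false X ∪ sl N false Y) * Rop F N false +
          QS F N (sl N false X ∩ sl N false Y) * Rop F N false) +
          ((QS F N (sl N true X ∪ sl N true Y) * Rop F N true +
          QS F N (sl N true X ∩ sl N true Y) * Rop F N true)) := by abel
      _ = (QS F N (sl N false X) * Rop F N false + QS F N (sl N false Y) * Rop F N false) +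
          (QS F N (sl N true X) * Rop F N true + QS F N (sl N true Y) * Rop F N true) := by
          rw [e false, e true]
      _ = _ := by abel

lemma QS_star : ∀ (N : ℕ) (X : Set (ℕ → Bool)), star (QS F N X) = QS F N X := by
  intro N
  induction N with
  | zero =>
    intro X
    by_cases h : (fun _ => false) ∈ X <;> simp [QS, h]
  | succ N ih =>
    intro X
    show star (QS F N (sl N false X) * _ + QS F N (sl N true X) * _) = _
    rw [star_add, star_mul, star_mul, ih, ih, Rop_sa F N false, Rop_sa F N true]
    rw [(QS_comm_Rop F N false N (sl N false X)).eq, (QS_comm_Rop F N true N (sl N true X)).eq]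
    rfl

lemma Det.sl_eq {N : ℕ} {X : Set (ℕ → Bool)} (hX : Det N X) (b : Bool) : sl N b X = X := by
  ext f
  have hagree : ∀ i < N, f i = Function.update f N b i := by
    intro i hi
    rw [Function.update_of_ne (by omega)]
  constructor
  · intro hf
    exact hX (Function.update f N b) f (fun i hi => (hagree i hi).symm) hf
  · intro hf
    exact hX f (Function.update f N b) hagree hf

lemma Det.sl_det {N : ℕ} {X : Set (ℕ → Bool)} (hX : Det (N + 1) X) (b : Bool) :
    Det N (sl N b X) := by
  intro f g hfg hf
  refine hX (Function.update f N b) (Function.update g N b) (fun i hi => ?_) hf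
  rcases Nat.lt_succ_iff_lt_or_eq.1 hi with hi' | rfl
  · rw [Function.update_of_ne (by omega), Function.update_of_ne (by omega)]
    exact hfg i hi'
  · simp

lemma QS_succ_of_det {N : ℕ} {X : Set (ℕ → Bool)} (hX : Det N X) :
    QS F (N + 1) X = QS F N X := by
  show QS F N (sl N false X) * _ + QS F N (sl N true X) * _ = _
  rw [hX.sl_eq false, hX.sl_eq true, ← mul_add,
    show Rop F N false + Rop F N true = 1 by simpa using Rop_add_other F N false, mul_one]

lemma QS_eq_of_det {N M : ℕ} (h : N ≤ M) {X : Set (ℕ → Bool)} (hX : Det N X) :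
    QS F M X = QS F N X := by
  induction M with
  | zero =>
    have : N = 0 := Nat.le_zero.mp h
    subst this; rfl
  | succ M ih =>
    rcases Nat.lt_succ_iff_lt_or_eq.1 (Nat.lt_succ_of_le h) with hM | rfl
    · have hNM : N ≤ M := by omega
      rw [QS_succ_of_det F (hX.mono hNM), ih hNM]
    · rfl

lemma QS_compl (N : ℕ) (X : Set (ℕ → Bool)) : QS F N Xᶜ = 1 - QS F N X := by
  have h := QS_add F N X Xᶜ
  rw [Set.union_compl_self, Set.inter_compl_self, QS_univ, QS_empty, add_zero] at h
  rw [h]; abel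



open scoped ComplexInnerProductSpace

lemma QS_inner_left (N : ℕ) (X : Set (ℕ → Bool)) (v w : V) :
    ⟪QS F N X v, w⟫ = ⟪v, QS F N X w⟫ := by
  rw [← ContinuousLinearMap.adjoint_inner_left, ← ContinuousLinearMap.star_eq_adjoint, QS_star]

lemma inner_QS (N : ℕ) (X Y : Set (ℕ → Bool)) (v : V) :
    ⟪QS F N X v, QS F N Y v⟫ = ((‖QS F N (X ∩ Y) v‖ ^ 2 : ℝ) : ℂ) := by
  have h1 : QS F N X (QS F N Y v) = QS F N (X ∩ Y) v := by
    rw [← ContinuousLinearMap.mul_apply, QS_mul]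
  have h2 : QS F N (X ∩ Y) (QS F N (X ∩ Y) v) = QS F N (X ∩ Y) v := by
    rw [← ContinuousLinearMap.mul_apply, QS_mul, Set.inter_self]
  calc ⟪QS F N X v, QS F N Y v⟫ = ⟪v, QS F N X (QS F N Y v)⟫ := QS_inner_left F N X v _
    _ = ⟪v, QS F N (X ∩ Y) (QS F N (X ∩ Y) v)⟫ := by rw [h1, h2]
    _ = ⟪QS F N (X ∩ Y) v, QS F N (X ∩ Y) v⟫ := (QS_inner_left F N _ v _).symm
    _ = _ := by
        rw [inner_self_eq_norm_sq_to_K]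
        norm_num

lemma QS_union_disjoint {X Y : Set (ℕ → Bool)} (h : X ∩ Y = ∅) (N : ℕ) :
    QS F N (X ∪ Y) = QS F N X + QS F N Y := by
  have := QS_add F N X Y
  rw [h, QS_empty, add_zero] at this
  exact this

lemma QS_pyth {X Y : Set (ℕ → Bool)} (h : X ∩ Y = ∅) (N : ℕ) (v : V) :
    ‖QS F N (X ∪ Y) v‖ ^ 2 = ‖QS F N X v‖ ^ 2 + ‖QS F N Y v‖ ^ 2 := by
  have hz : ⟪QS F N X v, QS F N Y v⟫ = 0 := by
    rw [inner_QS, h, QS_empty]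
    norm_num
  have := norm_add_sq_eq_norm_sq_add_norm_sq_of_inner_eq_zero (QS F N X v) (QS F N Y v) hz
  have happ : QS F N (X ∪ Y) v = QS F N X v + QS F N Y v := by
    rw [QS_union_disjoint F h]; rfl
  rw [happ]
  nlinarith [this]

lemma QS_norm_sq_mono {X Y : Set (ℕ → Bool)} (h : X ⊆ Y) (N : ℕ) (v : V) :
    ‖QS F N X v‖ ^ 2 ≤ ‖QS F N Y v‖ ^ 2 := by
  have hY : Y = X ∪ (Y \ X) := by rw [Set.union_diff_cancel h]
  have hd : X ∩ (Y \ X) = ∅ := by ext f; simp +contextual [Set.mem_diff]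
  rw [hY, QS_pyth F hd]
  nlinarith [norm_nonneg (QS F N (Y \ X) v), sq_nonneg (‖QS F N (Y \ X) v‖)]

lemma QS_norm_sq_subadd (X Y : Set (ℕ → Bool)) (N : ℕ) (v : V) :
    ‖QS F N (X ∪ Y) v‖ ^ 2 ≤ ‖QS F N X v‖ ^ 2 + ‖QS F N Y v‖ ^ 2 := by
  have hY : X ∪ Y = X ∪ (Y \ X) := by simp [Set.union_diff_self]
  have hd : X ∩ (Y \ X) = ∅ := by ext f; simp +contextual [Set.mem_diff]
  rw [hY, QS_pyth F hd]
  have := QS_norm_sq_mono F (Set.diff_subset : Y \ X ⊆ Y) N v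
  linarith

lemma QS_norm_le (N : ℕ) (X : Set (ℕ → Bool)) (v : V) : ‖QS F N X v‖ ≤ ‖v‖ := by
  have hd : X ∩ Xᶜ = ∅ := Set.inter_compl_self X
  have := QS_pyth F hd N v
  rw [Set.union_compl_self, QS_univ] at this
  have h1 : ‖(1 : V →L[ℂ] V) v‖ = ‖v‖ := by simp
  nlinarith [norm_nonneg (QS F N Xᶜ v), norm_nonneg (QS F N X v), norm_nonneg v]

/-- content associated to a vector -/
def contFun (ψ : V) : TopologicalSpace.Compacts (ℕ → Bool) → ℝ≥0 :=
  fun K => ⨅ N, ‖QS F N (satur N (K : Set (ℕ → Bool))) ψ‖₊ ^ 2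

lemma contFun_anti (ψ : V) (K : Set (ℕ → Bool)) :
    Antitone (fun N => (‖QS F N (satur N K) ψ‖₊ ^ 2 : ℝ≥0)) := by
  intro N M h
  simp only
  have h1 : QS F M (satur N K) = QS F N (satur N K) := QS_eq_of_det F h (det_satur N K)
  have h2 : ‖QS F M (satur M K) ψ‖ ^ 2 ≤ ‖QS F M (satur N K) ψ‖ ^ 2 :=
    QS_norm_sq_mono F (satur_anti h K) M ψ
  rw [h1] at h2
  have : ‖QS F M (satur M K) ψ‖₊ ^ 2 ≤ ‖QS F N (satur N K) ψ‖₊ ^ 2 := by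
    rw [← NNReal.coe_le_coe]
    push_cast
    simpa [sq] using h2
  exact this

lemma contFun_tendsto (ψ : V) (K : TopologicalSpace.Compacts (ℕ → Bool)) :
    Tendsto (fun N => (‖QS F N (satur N (K : Set (ℕ → Bool))) ψ‖₊ ^ 2 : ℝ≥0)) atTop
      (nhds (contFun F ψ K)) :=
  tendsto_atTop_ciInf (contFun_anti F ψ K) (OrderBot.bddBelow _)

/-- the content -/
def contentOf (ψ : V) : MeasureTheory.Content (ℕ → Bool) where
  toFun := contFun F ψ
  mono' := by
    intro K₁ K₂ h
    exact ciInf_mono (OrderBot.bddBelow _) fun N => by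
      have h2 : ‖QS F N (satur N (K₁ : Set (ℕ → Bool))) ψ‖ ^ 2 ≤
          ‖QS F N (satur N (K₂ : Set (ℕ → Bool))) ψ‖ ^ 2 :=
        QS_norm_sq_mono F (satur_mono N h) N ψ
      rw [← NNReal.coe_le_coe]
      push_cast
      simpa [sq] using h2
  sup_le' := by
    intro K₁ K₂
    refine le_of_tendsto_of_tendsto' (contFun_tendsto F ψ (K₁ ⊔ K₂))
      ((contFun_tendsto F ψ K₁).add (contFun_tendsto F ψ K₂)) (fun N => ?_)
    have hco : ((K₁ ⊔ K₂ : TopologicalSpace.Compacts (ℕ → Bool)) : Set (ℕ → Bool)) =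
        (K₁ : Set (ℕ → Bool)) ∪ (K₂ : Set (ℕ → Bool)) := rfl
    rw [hco, satur_union]
    have := QS_norm_sq_subadd F (satur N (K₁ : Set (ℕ → Bool)))
      (satur N (K₂ : Set (ℕ → Bool))) N ψ
    rw [← NNReal.coe_le_coe]
    push_cast
    simpa [sq] using this
  sup_disjoint' := by
    intro K₁ K₂ hdis _ _
    obtain ⟨N₀, hN₀⟩ := exists_satur_disjoint K₁.2 K₂.2 hdis
    have heq : ∀ᶠ N in atTop,
        (‖QS F N (satur N ((K₁ ⊔ K₂ : TopologicalSpace.Compacts (ℕ → Bool)) :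
          Set (ℕ → Bool))) ψ‖₊ ^ 2 : ℝ≥0) =
        ‖QS F N (satur N (K₁ : Set (ℕ → Bool))) ψ‖₊ ^ 2 +
        ‖QS F N (satur N (K₂ : Set (ℕ → Bool))) ψ‖₊ ^ 2 := by
      filter_upwards [eventually_ge_atTop N₀] with N hN
      have hd : satur N (K₁ : Set (ℕ → Bool)) ∩ satur N (K₂ : Set (ℕ → Bool)) = ∅ := by
        apply Set.eq_empty_of_subset_empty
        rw [← hN₀]
        exact Set.inter_subset_inter (satur_anti hN _) (satur_anti hN _)
      have hco : ((K₁ ⊔ K₂ : TopologicalSpace.Compacts (ℕ → Bool)) : Set (ℕ → Bool)) =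
          (K₁ : Set (ℕ → Bool)) ∪ (K₂ : Set (ℕ → Bool)) := rfl
      rw [hco, satur_union]
      have := QS_pyth F hd N ψ
      rw [← NNReal.coe_inj]
      push_cast
      simpa [sq] using this
    exact tendsto_nhds_unique (contFun_tendsto F ψ (K₁ ⊔ K₂))
      (Tendsto.congr' (heq.mono fun x hx => hx.symm)
        ((contFun_tendsto F ψ K₁).add (contFun_tendsto F ψ K₂)))

/-- the spectral-type measure attached to a vector -/
def mea (ψ : V) : Measure (ℕ → Bool) := (contentOf F ψ).measure

lemma mea_of_det {N : ℕ} {X : Set (ℕ → Bool)} (hX : Det N X) (ψ : V) :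
    mea F ψ X = ((‖QS F N X ψ‖₊ ^ 2 : ℝ≥0) : ℝ≥0∞) := by
  have hXo : IsOpen X := hX.isOpen
  have hXc : IsCompact X := hX.isCompact
  have hval : ∀ M, N ≤ M → (‖QS F M (satur M X) ψ‖₊ ^ 2 : ℝ≥0) = ‖QS F N X ψ‖₊ ^ 2 := by
    intro M hM
    rw [(hX.mono hM).satur_eq, QS_eq_of_det F hM hX]
  have hcf : contFun F ψ ⟨X, hXc⟩ = ‖QS F N X ψ‖₊ ^ 2 := by
    refine le_antisymm ?_ (le_ciInf fun M => ?_)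
    · exact (ciInf_le (OrderBot.bddBelow _) N).trans (le_of_eq (hval N le_rfl))
    calc (‖QS F N X ψ‖₊ ^ 2 : ℝ≥0) = ‖QS F (max M N) (satur (max M N) X) ψ‖₊ ^ 2 :=
          (hval _ (le_max_right M N)).symm
      _ ≤ ‖QS F M (satur M X) ψ‖₊ ^ 2 := contFun_anti F ψ X (le_max_left M N)
  rw [mea, Content.measure_apply _ hXo.measurableSet,
    (contentOf F ψ).outerMeasure_of_isOpen X hXo,
    (contentOf F ψ).innerContent_of_isCompact hXc hXo]
  show ((contFun F ψ ⟨X, hXc⟩ : ℝ≥0) : ℝ≥0∞) = _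
  exact_mod_cast hcf

lemma mea_univ (ψ : V) : mea F ψ Set.univ = ((‖ψ‖₊ ^ 2 : ℝ≥0) : ℝ≥0∞) := by
  rw [mea_of_det F (det_univ 0) ψ, QS_univ]
  norm_num

instance mea_finite (ψ : V) : IsFiniteMeasure (mea F ψ) := by
  constructor
  rw [mea_univ]
  exact ENNReal.coe_lt_top

lemma mea_toReal_of_det {N : ℕ} {X : Set (ℕ → Bool)} (hX : Det N X) (ψ : V) :
    (mea F ψ X).toReal = ‖QS F N X ψ‖ ^ 2 := by
  rw [mea_of_det F hX ψ]
  simp [ENNReal.coe_toReal, sq]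

/-- the canonical cylinder operator of a set in `𝒜` -/
def QA (C : Set (ℕ → Bool)) : V →L[ℂ] V :=
  if h : C ∈ 𝒜 then QS F (Nat.find h) C else 0

lemma QA_eq {N : ℕ} {C : Set (ℕ → Bool)} (hC : Det N C) : QA F C = QS F N C := by
  have h : C ∈ 𝒜 := ⟨N, hC⟩
  rw [QA, dif_pos h]
  have h₀ : Det (Nat.find h) C := Nat.find_spec h
  calc QS F (Nat.find h) C = QS F (max (Nat.find h) N) C :=
        (QS_eq_of_det F (le_max_left _ _) h₀).symm
    _ = QS F N C := QS_eq_of_det F (le_max_right _ _) hC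

lemma mea_dense (ρ : Measure (ℕ → Bool)) [IsFiniteMeasure ρ] : ρ.MeasureDense 𝒜 :=
  Measure.MeasureDense.of_generateFrom_isSetAlgebra_finite ρ isSetAlgebra_𝒜 generateFrom_𝒜

lemma exists_approx_seq (ρ : Measure (ℕ → Bool)) [IsFiniteMeasure ρ] {X : Set (ℕ → Bool)}
    (hX : MeasurableSet X) :
    ∃ C : ℕ → Set (ℕ → Bool), (∀ k, C k ∈ 𝒜) ∧
      Tendsto (fun k => (ρ (X ∆ C k)).toReal) atTop (𝓝 0) := by
  have h : ∀ k : ℕ, ∃ C ∈ 𝒜, ρ (X ∆ C) < ENNReal.ofReal (1 / (k + 1)) := fun k =>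
    (mea_dense ρ).approx X hX (measure_ne_top ρ X) _ (by positivity)
  choose C hC hlt using h
  refine ⟨C, hC, ?_⟩
  have hb : ∀ k : ℕ, (ρ (X ∆ C k)).toReal ≤ 1 / (k + 1) := by
    intro k
    calc (ρ (X ∆ C k)).toReal ≤ (ENNReal.ofReal (1 / (k + 1))).toReal :=
          ENNReal.toReal_mono (by simp) (hlt k).le
      _ = 1 / (k + 1) := ENNReal.toReal_ofReal (by positivity)
  exact squeeze_zero (fun k => ENNReal.toReal_nonneg) hb
    tendsto_one_div_add_atTop_nhds_zero_nat

lemma toReal_symmDiff_tri (ρ : Measure (ℕ → Bool)) [IsFiniteMeasure ρ]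
    (X C D : Set (ℕ → Bool)) :
    (ρ (C ∆ D)).toReal ≤ (ρ (X ∆ C)).toReal + (ρ (X ∆ D)).toReal := by
  have h1 : ρ (C ∆ D) ≤ ρ (X ∆ C) + ρ (X ∆ D) := by
    refine le_trans (measure_mono ?_) (measure_union_le _ _)
    calc C ∆ D ⊆ (C ∆ X) ∪ (X ∆ D) := symmDiff_triangle C X D
      _ = (X ∆ C) ∪ (X ∆ D) := by rw [symmDiff_comm]
  calc (ρ (C ∆ D)).toReal ≤ (ρ (X ∆ C) + ρ (X ∆ D)).toReal :=
        ENNReal.toReal_mono (by simp [measure_ne_top]) h1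
    _ = _ := ENNReal.toReal_add (measure_ne_top _ _) (measure_ne_top _ _)

lemma dist_QA {C D : Set (ℕ → Bool)} (hC : C ∈ 𝒜) (hD : D ∈ 𝒜) (ψ : V) :
    ‖QA F C ψ - QA F D ψ‖ ^ 2 = (mea F ψ (C ∆ D)).toReal := by
  obtain ⟨N₁, hN₁⟩ := hC
  obtain ⟨N₂, hN₂⟩ := hD
  set N := max N₁ N₂ with hN
  have hCN : Det N C := hN₁.mono (le_max_left _ _)
  have hDN : Det N D := hN₂.mono (le_max_right _ _)
  rw [QA_eq F hCN, QA_eq F hDN]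
  have hCd : QS F N C = QS F N (C ∩ D) + QS F N (C \ D) := by
    rw [← QS_union_disjoint F (by ext f; simp (config := { contextual := true }) [Set.mem_diff]) N,
      Set.inter_union_diff]
  have hDd : QS F N D = QS F N (C ∩ D) + QS F N (D \ C) := by
    rw [← QS_union_disjoint F (by ext f; simp (config := { contextual := true }) [Set.mem_diff]) N]
    rw [show (C ∩ D) ∪ (D \ C) = D by rw [Set.inter_comm, Set.inter_union_diff]]
  have hdiff : QS F N C ψ - QS F N D ψ = QS F N (C \ D) ψ + -(QS F N (D \ C) ψ) := by
    rw [hCd, hDd]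
    simp only [ContinuousLinearMap.add_apply]
    abel
  have hz : ⟪QS F N (C \ D) ψ, -(QS F N (D \ C) ψ)⟫ = 0 := by
    rw [inner_neg_right, inner_QS, show (C \ D) ∩ (D \ C) = ∅ from by
      ext f; simp (config := { contextual := true }) [Set.mem_diff], QS_empty]
    norm_num
  have hpy := norm_add_sq_eq_norm_sq_add_norm_sq_of_inner_eq_zero _ _ hz
  have hsd : Det N (C ∆ D) := hCN.symmDiff hDN
  rw [mea_toReal_of_det F hsd ψ]
  have hsplit : ‖QS F N (C ∆ D) ψ‖ ^ 2 = ‖QS F N (C \ D) ψ‖ ^ 2 + ‖QS F N (D \ C) ψ‖ ^ 2 := by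
    rw [Set.symmDiff_def]
    exact QS_pyth F (by ext f; simp (config := { contextual := true }) [Set.mem_diff]) N ψ
  rw [hdiff, hsplit]
  rw [norm_neg] at hpy
  nlinarith [hpy]

lemma norm_QA_sq {C : Set (ℕ → Bool)} (hC : C ∈ 𝒜) (ψ : V) :
    ‖QA F C ψ‖ ^ 2 = (mea F ψ C).toReal := by
  have h := dist_QA F hC isSetAlgebra_𝒜.empty_mem ψ
  rw [QA_eq F (det_empty 0), QS_empty] at h
  rw [show C ∆ (∅ : Set (ℕ → Bool)) = C by simp] at h
  simpa using h

lemma norm_QA_le {C : Set (ℕ → Bool)} (hC : C ∈ 𝒜) (v : V) : ‖QA F C v‖ ≤ ‖v‖ := by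
  obtain ⟨N, hN⟩ := hC
  rw [QA_eq F hN]
  exact QS_norm_le F N C v

/-- the projection applied to a vector, as a limit -/
def Pv (X : Set (ℕ → Bool)) (ψ : V) : V :=
  if h : MeasurableSet X then
    limUnder atTop (fun k => QA F (Classical.choose (exists_approx_seq (mea F ψ) h) k) ψ)
  else 0

lemma tendsto_QA_Pv {X : Set (ℕ → Bool)} (hX : MeasurableSet X) (ψ : V)
    {C : ℕ → Set (ℕ → Bool)} (hC : ∀ k, C k ∈ 𝒜)
    (hT : Tendsto (fun k => (mea F ψ (X ∆ C k)).toReal) atTop (𝓝 0)) :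
    Tendsto (fun k => QA F (C k) ψ) atTop (𝓝 (Pv F X ψ)) := by
  set D := Classical.choose (exists_approx_seq (mea F ψ) hX) with hDdef
  obtain ⟨hD𝒜, hDT⟩ := Classical.choose_spec (exists_approx_seq (mea F ψ) hX)
  -- the defining sequence is Cauchy
  have hdist : ∀ {E E' : Set (ℕ → Bool)}, E ∈ 𝒜 → E' ∈ 𝒜 →
      ‖QA F E ψ - QA F E' ψ‖ ^ 2 ≤ (mea F ψ (X ∆ E)).toReal + (mea F ψ (X ∆ E')).toReal := by
    intro E E' hE hE'
    rw [dist_QA F hE hE' ψ]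
    exact toReal_symmDiff_tri (mea F ψ) X E E'
  have hcauchy : CauchySeq (fun k => QA F (D k) ψ) := by
    rw [Metric.cauchySeq_iff]
    intro ε hε
    have h2 : (0:ℝ) < ε ^ 2 / 2 := by positivity
    obtain ⟨K, hK⟩ := (Metric.tendsto_atTop.1 hDT) (ε ^ 2 / 2) h2
    refine ⟨K, fun j hj k hk => ?_⟩
    have hj' := hK j hj
    have hk' := hK k hk
    rw [Real.dist_eq] at hj' hk'
    have hjr : (mea F ψ (X ∆ D j)).toReal < ε ^ 2 / 2 := by
      have := abs_lt.1 hj'; simpa using this.2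
    have hkr : (mea F ψ (X ∆ D k)).toReal < ε ^ 2 / 2 := by
      have := abs_lt.1 hk'; simpa using this.2
    have hd := hdist (hD𝒜 j) (hD𝒜 k)
    rw [dist_eq_norm]
    nlinarith [norm_nonneg (QA F (D j) ψ - QA F (D k) ψ)]
  obtain ⟨v, hv⟩ := cauchySeq_tendsto_of_complete hcauchy
  have hPv : Pv F X ψ = v := by
    rw [Pv, dif_pos hX, ← hDdef, hv.limUnder_eq]
  rw [hPv]
  -- now compare the two sequences
  rw [tendsto_iff_norm_sub_tendsto_zero]
  have hbnd : ∀ k, ‖QA F (C k) ψ - v‖ ≤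
      Real.sqrt ((mea F ψ (X ∆ C k)).toReal + (mea F ψ (X ∆ D k)).toReal) +
      ‖QA F (D k) ψ - v‖ := by
    intro k
    have h1 : ‖QA F (C k) ψ - QA F (D k) ψ‖ ≤
        Real.sqrt ((mea F ψ (X ∆ C k)).toReal + (mea F ψ (X ∆ D k)).toReal) := by
      have h2 := hdist (hC k) (hD𝒜 k)
      have h3 : ‖QA F (C k) ψ - QA F (D k) ψ‖ =
          Real.sqrt (‖QA F (C k) ψ - QA F (D k) ψ‖ ^ 2) := by
        rw [Real.sqrt_sq (norm_nonneg _)]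
      rw [h3]
      exact Real.sqrt_le_sqrt h2
    calc ‖QA F (C k) ψ - v‖ ≤ ‖QA F (C k) ψ - QA F (D k) ψ‖ + ‖QA F (D k) ψ - v‖ := by
          simpa [dist_eq_norm] using dist_triangle (QA F (C k) ψ) (QA F (D k) ψ) v
      _ ≤ _ := by linarith
  have hsq : Tendsto (fun k => Real.sqrt ((mea F ψ (X ∆ C k)).toReal +
      (mea F ψ (X ∆ D k)).toReal) + ‖QA F (D k) ψ - v‖) atTop (𝓝 0) := by
    have hs : Tendsto (fun k => (mea F ψ (X ∆ C k)).toReal + (mea F ψ (X ∆ D k)).toReal)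
        atTop (𝓝 0) := by simpa using hT.add hDT
    have h1 : Tendsto (fun k => Real.sqrt ((mea F ψ (X ∆ C k)).toReal +
        (mea F ψ (X ∆ D k)).toReal)) atTop (𝓝 0) := by
      have := (Real.continuous_sqrt.tendsto 0).comp hs
      simpa [Function.comp_def] using this
    have h2 : Tendsto (fun k => ‖QA F (D k) ψ - v‖) atTop (𝓝 0) := by
      rw [← tendsto_iff_norm_sub_tendsto_zero] at *
      exact hv
    simpa using h1.add h2
  exact squeeze_zero (fun k => norm_nonneg _) hbnd hsq

lemma Pv_of_mem {C : Set (ℕ → Bool)} (hC : C ∈ 𝒜) (ψ : V) : Pv F C ψ = QA F C ψ := by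
  have h := tendsto_QA_Pv F (mem_𝒜_measurableSet hC) ψ (C := fun _ => C) (fun _ => hC)
    (by simp [symmDiff_self])
  exact (tendsto_nhds_unique tendsto_const_nhds h).symm

lemma Pv_not_measurable {X : Set (ℕ → Bool)} (hX : ¬ MeasurableSet X) (ψ : V) :
    Pv F X ψ = 0 := by rw [Pv, dif_neg hX]

lemma QA_star (C : Set (ℕ → Bool)) : star (QA F C) = QA F C := by
  rw [QA]
  split
  · next h => exact QS_star F _ C
  · exact star_zero _

lemma QA_inner_left (C : Set (ℕ → Bool)) (v w : V) : ⟪QA F C v, w⟫ = ⟪v, QA F C w⟫ := by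
  rw [← ContinuousLinearMap.adjoint_inner_left, ← ContinuousLinearMap.star_eq_adjoint, QA_star]

lemma QA_inter {C D : Set (ℕ → Bool)} (hC : C ∈ 𝒜) (hD : D ∈ 𝒜) :
    QA F (C ∩ D) = QA F C * QA F D := by
  obtain ⟨N₁, hN₁⟩ := hC
  obtain ⟨N₂, hN₂⟩ := hD
  have hCN : Det (max N₁ N₂) C := hN₁.mono (le_max_left _ _)
  have hDN : Det (max N₁ N₂) D := hN₂.mono (le_max_right _ _)
  rw [QA_eq F hCN, QA_eq F hDN, QA_eq F (hCN.inter hDN), QS_mul]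

lemma QA_compl {C : Set (ℕ → Bool)} (hC : C ∈ 𝒜) : QA F Cᶜ = 1 - QA F C := by
  obtain ⟨N, hN⟩ := hC
  rw [QA_eq F hN, QA_eq F hN.compl, QS_compl]

lemma QA_univ : QA F (Set.univ : Set (ℕ → Bool)) = 1 := by
  rw [QA_eq F (det_univ 0), QS_univ]

lemma QA_empty : QA F (∅ : Set (ℕ → Bool)) = 0 := by
  rw [QA_eq F (det_empty 0), QS_empty]

lemma le_madd1 (μ σ : Measure (ℕ → Bool)) : ∀ s, μ s ≤ (μ + σ) s := fun s => by
  rw [Measure.add_apply]; exact le_self_add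

lemma le_madd2 (μ σ : Measure (ℕ → Bool)) : ∀ s, σ s ≤ (μ + σ) s := fun s => by
  rw [Measure.add_apply]; exact le_add_self

/-- master approximation: one sequence works for all dominated vectors -/
lemma master {X : Set (ℕ → Bool)} (hX : MeasurableSet X) (ρ : Measure (ℕ → Bool))
    [IsFiniteMeasure ρ] :
    ∃ C : ℕ → Set (ℕ → Bool), (∀ k, C k ∈ 𝒜) ∧
      ∀ ψ : V, (∀ s, mea F ψ s ≤ ρ s) →
        Tendsto (fun k => (mea F ψ (X ∆ C k)).toReal) atTop (𝓝 0) ∧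
        Tendsto (fun k => QA F (C k) ψ) atTop (𝓝 (Pv F X ψ)) := by
  obtain ⟨C, hC, hT⟩ := exists_approx_seq ρ hX
  refine ⟨C, hC, fun ψ hle => ?_⟩
  have h0 : Tendsto (fun k => (mea F ψ (X ∆ C k)).toReal) atTop (𝓝 0) :=
    squeeze_zero (fun k => ENNReal.toReal_nonneg)
      (fun k => ENNReal.toReal_mono (measure_ne_top ρ _) (hle _)) hT
  exact ⟨h0, tendsto_QA_Pv F hX ψ hC h0⟩

lemma Pv_add {X : Set (ℕ → Bool)} (hX : MeasurableSet X) (ψ φ : V) :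
    Pv F X (ψ + φ) = Pv F X ψ + Pv F X φ := by
  obtain ⟨C, hC, hkey⟩ := master F hX (mea F ψ + mea F φ + mea F (ψ + φ))
  have h1 := (hkey ψ (fun s => le_trans (le_madd1 _ _ s) (le_madd1 _ _ s))).2
  have h2 := (hkey φ (fun s => le_trans (le_madd2 _ _ s) (le_madd1 _ _ s))).2
  have h3 := (hkey (ψ + φ) (fun s => le_madd2 _ _ s)).2
  refine tendsto_nhds_unique h3 ?_
  have : (fun k => QA F (C k) (ψ + φ)) = fun k => QA F (C k) ψ + QA F (C k) φ := by
    funext k; rw [map_add]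
  rw [this]
  exact h1.add h2

lemma Pv_smul {X : Set (ℕ → Bool)} (hX : MeasurableSet X) (c : ℂ) (ψ : V) :
    Pv F X (c • ψ) = c • Pv F X ψ := by
  obtain ⟨C, hC, hkey⟩ := master F hX (mea F ψ + mea F (c • ψ))
  have h1 := (hkey ψ (le_madd1 _ _)).2
  have h2 := (hkey (c • ψ) (le_madd2 _ _)).2
  refine tendsto_nhds_unique h2 ?_
  have : (fun k => QA F (C k) (c • ψ)) = fun k => c • QA F (C k) ψ := by
    funext k; exact _root_.map_smul (QA F (C k)) c ψ
  rw [this]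
  exact h1.const_smul c

lemma Pv_norm_le {X : Set (ℕ → Bool)} (hX : MeasurableSet X) (ψ : V) :
    ‖Pv F X ψ‖ ≤ ‖ψ‖ := by
  obtain ⟨C, hC, hkey⟩ := master F hX (mea F ψ)
  have h1 := (hkey ψ (fun s => le_rfl)).2
  exact le_of_tendsto h1.norm (Eventually.of_forall fun k => norm_QA_le F (hC k) ψ)

/-- the bundled projection operator -/
def Pop {X : Set (ℕ → Bool)} (hX : MeasurableSet X) : V →L[ℂ] V :=
  LinearMap.mkContinuous
    { toFun := Pv F X
      map_add' := Pv_add F hX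
      map_smul' := Pv_smul F hX } 1 (fun ψ => by simpa using Pv_norm_le F hX ψ)

/-- total function version -/
def Pfin (X : Set (ℕ → Bool)) : V →L[ℂ] V :=
  if h : MeasurableSet X then Pop F h else 0

lemma Pfin_apply {X : Set (ℕ → Bool)} (hX : MeasurableSet X) (ψ : V) :
    Pfin F X ψ = Pv F X ψ := by
  rw [Pfin, dif_pos hX]; rfl

lemma Pfin_of_mem {C : Set (ℕ → Bool)} (hC : C ∈ 𝒜) : Pfin F C = QA F C := by
  ext ψ
  rw [Pfin_apply F (mem_𝒜_measurableSet hC), Pv_of_mem F hC]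

lemma Pfin_univ : Pfin F (Set.univ : Set (ℕ → Bool)) = 1 := by
  rw [Pfin_of_mem F ⟨0, det_univ 0⟩, QA_univ]

lemma Pfin_empty : Pfin F (∅ : Set (ℕ → Bool)) = 0 := by
  rw [Pfin_of_mem F ⟨0, det_empty 0⟩, QA_empty]

lemma Pfin_compl {X : Set (ℕ → Bool)} (hX : MeasurableSet X) :
    Pfin F Xᶜ = 1 - Pfin F X := by
  ext ψ
  rw [Pfin_apply F hX.compl, Pfin]
  rw [dif_pos hX]
  obtain ⟨C, hC, hkey⟩ := master F hX (mea F ψ)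
  have h1 := hkey ψ (fun s => le_rfl)
  have hC' : ∀ k, (C k)ᶜ ∈ 𝒜 := fun k => isSetAlgebra_𝒜.compl_mem (hC k)
  have hT' : Tendsto (fun k => (mea F ψ (Xᶜ ∆ (C k)ᶜ)).toReal) atTop (𝓝 0) := by
    have : ∀ k, Xᶜ ∆ (C k)ᶜ = X ∆ C k := fun k => compl_symmDiff_compl X (C k)
    simpa [this] using h1.1
  have h2 := tendsto_QA_Pv F hX.compl ψ hC' hT'
  have h3 : Tendsto (fun k => QA F ((C k)ᶜ) ψ) atTop (𝓝 (ψ - Pv F X ψ)) := by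
    have heq : (fun k => QA F ((C k)ᶜ) ψ) = fun k => ψ - QA F (C k) ψ := by
      funext k
      rw [QA_compl F (hC k)]
      simp
    rw [heq]
    simpa using (tendsto_const_nhds (x := ψ)).sub h1.2
  have := tendsto_nhds_unique h2 h3
  rw [this]
  simp
  rfl

lemma inter_symmDiff_subset (X Y C D : Set (ℕ → Bool)) :
    (X ∩ Y) ∆ (C ∩ D) ⊆ (X ∆ C) ∪ (Y ∆ D) := by
  intro f hf
  simp only [Set.mem_symmDiff, Set.mem_union, Set.mem_inter_iff] at *
  tauto

lemma Pv_inter {X Y : Set (ℕ → Bool)} (hX : MeasurableSet X) (hY : MeasurableSet Y) (ψ : V) :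
    Pv F (X ∩ Y) ψ = Pv F X (Pv F Y ψ) := by
  obtain ⟨C, hC, hkeyX⟩ := master F hX (mea F ψ + mea F (Pv F Y ψ))
  obtain ⟨D, hD, hkeyY⟩ := master F hY (mea F ψ)
  have hXψ := hkeyX ψ (le_madd1 _ _)
  have hXφ := hkeyX (Pv F Y ψ) (le_madd2 _ _)
  have hYψ := hkeyY ψ (fun s => le_rfl)
  -- (a) QA (C k ∩ D k) ψ tends to Pv (X ∩ Y) ψ
  have ha : Tendsto (fun k => QA F (C k ∩ D k) ψ) atTop (𝓝 (Pv F (X ∩ Y) ψ)) := by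
    refine tendsto_QA_Pv F (hX.inter hY) ψ (fun k => mem_𝒜_inter (hC k) (hD k)) ?_
    have hb : ∀ k, (mea F ψ ((X ∩ Y) ∆ (C k ∩ D k))).toReal ≤
        (mea F ψ (X ∆ C k)).toReal + (mea F ψ (Y ∆ D k)).toReal := by
      intro k
      have h1 : mea F ψ ((X ∩ Y) ∆ (C k ∩ D k)) ≤ mea F ψ (X ∆ C k) + mea F ψ (Y ∆ D k) :=
        le_trans (measure_mono (inter_symmDiff_subset X Y (C k) (D k))) (measure_union_le _ _)
      calc (mea F ψ ((X ∩ Y) ∆ (C k ∩ D k))).toReal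
          ≤ (mea F ψ (X ∆ C k) + mea F ψ (Y ∆ D k)).toReal :=
            ENNReal.toReal_mono (by simp [measure_ne_top]) h1
        _ = _ := ENNReal.toReal_add (measure_ne_top _ _) (measure_ne_top _ _)
    refine squeeze_zero (fun k => ENNReal.toReal_nonneg) hb ?_
    simpa using (hXψ.1).add (hYψ.1)
  -- (b) QA (C k ∩ D k) ψ tends to Pv X (Pv Y ψ)
  have hb : Tendsto (fun k => QA F (C k ∩ D k) ψ) atTop (𝓝 (Pv F X (Pv F Y ψ))) := by
    rw [tendsto_iff_norm_sub_tendsto_zero]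
    have hbd : ∀ k, ‖QA F (C k ∩ D k) ψ - Pv F X (Pv F Y ψ)‖ ≤
        ‖QA F (D k) ψ - Pv F Y ψ‖ + ‖QA F (C k) (Pv F Y ψ) - Pv F X (Pv F Y ψ)‖ := by
      intro k
      have heq : QA F (C k ∩ D k) ψ = QA F (C k) (QA F (D k) ψ) := by
        rw [QA_inter F (hC k) (hD k)]; rfl
      calc ‖QA F (C k ∩ D k) ψ - Pv F X (Pv F Y ψ)‖
          ≤ ‖QA F (C k) (QA F (D k) ψ) - QA F (C k) (Pv F Y ψ)‖ +
            ‖QA F (C k) (Pv F Y ψ) - Pv F X (Pv F Y ψ)‖ := by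
            rw [heq]
            simpa [dist_eq_norm] using dist_triangle (QA F (C k) (QA F (D k) ψ))
              (QA F (C k) (Pv F Y ψ)) (Pv F X (Pv F Y ψ))
        _ ≤ ‖QA F (D k) ψ - Pv F Y ψ‖ + ‖QA F (C k) (Pv F Y ψ) - Pv F X (Pv F Y ψ)‖ := by
            have : QA F (C k) (QA F (D k) ψ) - QA F (C k) (Pv F Y ψ) =
                QA F (C k) (QA F (D k) ψ - Pv F Y ψ) := by rw [map_sub]
            rw [this]
            have := norm_QA_le F (hC k) (QA F (D k) ψ - Pv F Y ψ)
            linarith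
    have hlim : Tendsto (fun k => ‖QA F (D k) ψ - Pv F Y ψ‖ +
        ‖QA F (C k) (Pv F Y ψ) - Pv F X (Pv F Y ψ)‖) atTop (𝓝 0) := by
      have l1 : Tendsto (fun k => ‖QA F (D k) ψ - Pv F Y ψ‖) atTop (𝓝 0) := by
        rw [← tendsto_iff_norm_sub_tendsto_zero]; exact hYψ.2
      have l2 : Tendsto (fun k => ‖QA F (C k) (Pv F Y ψ) - Pv F X (Pv F Y ψ)‖) atTop (𝓝 0) := by
        rw [← tendsto_iff_norm_sub_tendsto_zero]; exact hXφ.2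
      simpa using l1.add l2
    exact squeeze_zero (fun k => norm_nonneg _) hbd hlim
  exact tendsto_nhds_unique ha hb

lemma Pfin_inter {X Y : Set (ℕ → Bool)} (hX : MeasurableSet X) (hY : MeasurableSet Y) :
    Pfin F (X ∩ Y) = Pfin F X ∘L Pfin F Y := by
  ext ψ
  rw [ContinuousLinearMap.comp_apply, Pfin_apply F (hX.inter hY), Pfin_apply F hY,
    Pfin_apply F hX, Pv_inter F hX hY]

lemma Pfin_selfadjoint {X : Set (ℕ → Bool)} (hX : MeasurableSet X) :
    IsSelfAdjoint (Pfin F X) := by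
  rw [ContinuousLinearMap.isSelfAdjoint_iff_isSymmetric]
  intro x y
  show ⟪Pfin F X x, y⟫ = ⟪x, Pfin F X y⟫
  rw [Pfin_apply F hX, Pfin_apply F hX]
  obtain ⟨C, hC, hkey⟩ := master F hX (mea F x + mea F y)
  have h1 := (hkey x (le_madd1 _ _)).2
  have h2 := (hkey y (le_madd2 _ _)).2
  have l1 : Tendsto (fun k => ⟪QA F (C k) x, y⟫) atTop (𝓝 ⟪Pv F X x, y⟫) :=
    h1.inner tendsto_const_nhds
  have l2 : Tendsto (fun k => ⟪x, QA F (C k) y⟫) atTop (𝓝 ⟪x, Pv F X y⟫) :=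
    tendsto_const_nhds.inner h2
  refine tendsto_nhds_unique ?_ l2
  have : (fun k => ⟪QA F (C k) x, y⟫) = fun k => ⟪x, QA F (C k) y⟫ := by
    funext k; exact QA_inner_left F (C k) x y
  rw [← this]
  exact l1

lemma norm_Pv_sq_le {E : Set (ℕ → Bool)} (hE : MeasurableSet E) (ψ : V) :
    ‖Pv F E ψ‖ ^ 2 ≤ (mea F ψ E).toReal := by
  obtain ⟨C, hC, hkey⟩ := master F hE (mea F ψ)
  have h1 := hkey ψ (fun s => le_rfl)
  have ha : Tendsto (fun k => ‖QA F (C k) ψ‖ ^ 2) atTop (𝓝 (‖Pv F E ψ‖ ^ 2)) :=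
    (h1.2.norm).pow 2
  have hb : Tendsto (fun k => (mea F ψ E).toReal + (mea F ψ (E ∆ C k)).toReal) atTop
      (𝓝 ((mea F ψ E).toReal)) := by
    simpa using (tendsto_const_nhds (x := (mea F ψ E).toReal)).add h1.1
  refine le_of_tendsto_of_tendsto' ha hb (fun k => ?_)
  rw [norm_QA_sq F (hC k)]
  have hsub : C k ⊆ E ∪ (E ∆ C k) := by
    intro f hf
    by_cases hfE : f ∈ E
    · exact Or.inl hfE
    · exact Or.inr (Set.mem_symmDiff.2 (Or.inr ⟨hf, hfE⟩))
  have h2 : mea F ψ (C k) ≤ mea F ψ E + mea F ψ (E ∆ C k) :=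
    le_trans (measure_mono hsub) (measure_union_le _ _)
  calc (mea F ψ (C k)).toReal ≤ (mea F ψ E + mea F ψ (E ∆ C k)).toReal :=
        ENNReal.toReal_mono (by simp [measure_ne_top]) h2
    _ = _ := ENNReal.toReal_add (measure_ne_top _ _) (measure_ne_top _ _)

lemma Pfin_union_disjoint {X Y : Set (ℕ → Bool)} (hX : MeasurableSet X)
    (hY : MeasurableSet Y) (hd : X ∩ Y = ∅) :
    Pfin F (X ∪ Y) = Pfin F X + Pfin F Y := by
  have h1 : Pfin F ((X ∪ Y)ᶜ) = 1 - Pfin F (X ∪ Y) := Pfin_compl F (hX.union hY)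
  have h2 : (X ∪ Y)ᶜ = Xᶜ ∩ Yᶜ := Set.compl_union X Y
  have h3 : Pfin F (Xᶜ ∩ Yᶜ) = Pfin F Xᶜ * Pfin F Yᶜ := by
    rw [Pfin_inter F hX.compl hY.compl]; rfl
  have h4 : Pfin F X * Pfin F Y = 0 := by
    have : Pfin F (X ∩ Y) = Pfin F X * Pfin F Y := by
      rw [Pfin_inter F hX hY]; rfl
    rw [← this, hd, Pfin_empty]
  have h5 : Pfin F Xᶜ = 1 - Pfin F X := Pfin_compl F hX
  have h6 : Pfin F Yᶜ = 1 - Pfin F Y := Pfin_compl F hY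
  rw [h2, h3, h5, h6] at h1
  have h7 : (1 - Pfin F X) * (1 - Pfin F Y) =
      1 - Pfin F X - Pfin F Y + Pfin F X * Pfin F Y := by noncomm_ring
  rw [h7, h4, add_zero] at h1
  have := congrArg (fun T => (1 : V →L[ℂ] V) - T) h1
  rw [sub_sub_cancel] at this
  rw [show (1 : V →L[ℂ] V) - (1 - Pfin F X - Pfin F Y) = Pfin F X + Pfin F Y by abel] at this
  exact this.symm

lemma Pfin_biUnion (X : ℕ → Set (ℕ → Bool)) (hX : ∀ n, MeasurableSet (X n))
    (hdis : Pairwise (Function.onFun Disjoint X)) (N : ℕ) :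
    Pfin F (⋃ n ∈ Finset.range N, X n) = ∑ n ∈ Finset.range N, Pfin F (X n) := by
  induction N with
  | zero => simpa using Pfin_empty F
  | succ N ih =>
    have hmB : MeasurableSet (⋃ n ∈ Finset.range N, X n) :=
      MeasurableSet.biUnion (Finset.range N).countable_toSet (fun n _ => hX n)
    have hsplit : (⋃ n ∈ Finset.range (N + 1), X n) = (⋃ n ∈ Finset.range N, X n) ∪ X N := by
      rw [Finset.range_add_one]
      simp [Set.biUnion_insert, Set.union_comm]
    have hd : (⋃ n ∈ Finset.range N, X n) ∩ X N = ∅ := by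
      apply Set.eq_empty_of_subset_empty
      rintro f ⟨hf1, hf2⟩
      simp only [Set.mem_iUnion, Finset.mem_range, exists_prop] at hf1
      obtain ⟨n, hn, hfn⟩ := hf1
      exact absurd rfl ((hdis (show n ≠ N by omega)).ne_of_mem hfn hf2)
    rw [hsplit, Pfin_union_disjoint F hmB (hX N) hd, ih, Finset.sum_range_succ]

lemma Pfin_sigma_additive (X : ℕ → Set (ℕ → Bool)) (hX : ∀ n, MeasurableSet (X n))
    (hdis : Pairwise (Function.onFun Disjoint X)) (ψ : V) :
    Tendsto (fun N => ∑ n ∈ Finset.range N, Pfin F (X n) ψ) atTop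
      (𝓝 (Pfin F (⋃ n, X n) ψ)) := by
  set U := ⋃ n, X n with hU
  have hmU : MeasurableSet U := MeasurableSet.iUnion hX
  set B : ℕ → Set (ℕ → Bool) := fun N => ⋃ n ∈ Finset.range N, X n with hB
  have hmB : ∀ N, MeasurableSet (B N) :=
    fun N => MeasurableSet.biUnion (Finset.range N).countable_toSet (fun n _ => hX n)
  set T : ℕ → Set (ℕ → Bool) := fun N => U \ B N with hT
  have hmT : ∀ N, MeasurableSet (T N) := fun N => hmU.diff (hmB N)
  have hsplit : ∀ N, Pfin F U = Pfin F (B N) + Pfin F (T N) := by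
    intro N
    have h1 : U = B N ∪ T N := by
      rw [hT]
      simp only [Set.union_diff_self]
      rw [Set.union_eq_self_of_subset_left]
      exact Set.iUnion₂_subset (fun n _ => Set.subset_iUnion X n)
    have h2 : B N ∩ T N = ∅ := by
      apply Set.eq_empty_of_subset_empty
      rintro f ⟨hf1, hf2⟩
      exact hf2.2 hf1
    conv_lhs => rw [h1]
    exact Pfin_union_disjoint F (hmB N) (hmT N) h2
  have hsum : ∀ N, ∑ n ∈ Finset.range N, Pfin F (X n) ψ = Pfin F (B N) ψ := by
    intro N
    rw [hB, Pfin_biUnion F X hX hdis N]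
    simp [ContinuousLinearMap.sum_apply]
  have hTmeas : Tendsto (fun N => (mea F ψ (T N)).toReal) atTop (𝓝 0) := by
    have hanti : Antitone T := by
      intro N M h
      refine Set.diff_subset_diff_right ?_
      intro f hf
      simp only [hB, Set.mem_iUnion, Finset.mem_range, exists_prop] at *
      obtain ⟨n, hn, hfn⟩ := hf
      exact ⟨n, by omega, hfn⟩
    have hempty : (⋂ N, T N) = ∅ := by
      apply Set.eq_empty_of_subset_empty
      intro f hf
      have hfU : f ∈ U := (Set.mem_iInter.1 hf 0).1
      obtain ⟨n, hn⟩ := Set.mem_iUnion.1 hfU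
      have := Set.mem_iInter.1 hf (n + 1)
      refine this.2 ?_
      simp only [hB, Set.mem_iUnion, Finset.mem_range, exists_prop]
      exact ⟨n, by omega, hn⟩
    have h1 : Tendsto (fun N => mea F ψ (T N)) atTop (𝓝 (mea F ψ (⋂ N, T N))) := by
      refine MeasureTheory.tendsto_measure_iInter_atTop (fun N => (hmT N).nullMeasurableSet)
        hanti ⟨0, measure_ne_top _ _⟩
    rw [hempty] at h1
    simp only [measure_empty] at h1
    have h2 := (ENNReal.tendsto_toReal (ENNReal.zero_ne_top)).comp h1
    simpa [Function.comp_def] using h2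
  rw [tendsto_iff_norm_sub_tendsto_zero]
  have hnorm : ∀ N, ‖∑ n ∈ Finset.range N, Pfin F (X n) ψ - Pfin F U ψ‖ ≤
      Real.sqrt ((mea F ψ (T N)).toReal) := by
    intro N
    have h1 : ∑ n ∈ Finset.range N, Pfin F (X n) ψ - Pfin F U ψ = -(Pfin F (T N) ψ) := by
      rw [hsum N, hsplit N]
      simp
    rw [h1, norm_neg]
    have h2 : ‖Pfin F (T N) ψ‖ ^ 2 ≤ (mea F ψ (T N)).toReal := by
      rw [Pfin_apply F (hmT N)]
      exact norm_Pv_sq_le F (hmT N) ψ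
    have h3 : ‖Pfin F (T N) ψ‖ = Real.sqrt (‖Pfin F (T N) ψ‖ ^ 2) := by
      rw [Real.sqrt_sq (norm_nonneg _)]
    rw [h3]
    exact Real.sqrt_le_sqrt h2
  refine squeeze_zero (fun N => norm_nonneg _) hnorm ?_
  have := (Real.continuous_sqrt.tendsto 0).comp hTmeas
  simpa [Function.comp_def] using this

lemma Pfin_coord (n : ℕ) : Pfin F {f : ℕ → Bool | f n = true} = F.P n := by
  set X : Set (ℕ → Bool) := {f | f n = true} with hXdef
  have hdet : Det (n + 1) X := by
    intro f g hfg hf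
    have := hfg n (Nat.lt_succ_self n)
    simpa [hXdef, ← this] using hf
  rw [Pfin_of_mem F ⟨n + 1, hdet⟩, QA_eq F hdet]
  have hslf : sl n false X = ∅ := by
    ext f
    simp [sl, hXdef, Function.update_self]
  have hslt : sl n true X = Set.univ := by
    ext f
    simp [sl, hXdef, Function.update_self]
  show QS F n (sl n false X) * Rop F n false + QS F n (sl n true X) * Rop F n true = F.P n
  rw [hslf, hslt, QS_empty, QS_univ, zero_mul, one_mul, zero_add]
  rfl

end PVMAux

open Filter

/-- Given a sequence of pairwise commuting orthogonal projections `Pn` on a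
complex Hilbert space `V`, there is a projection-valued Borel homomorphism on the space
`ℕ → Bool` (with its Borel σ-algebra) extending it. -/
theorem exists_projection_valued_borel_hom
    {V : Type*} [NormedAddCommGroup V] [InnerProductSpace ℂ V] [CompleteSpace V]
    (Pn : ℕ → V →L[ℂ] V)
    (hidem : ∀ n, Pn n ∘L Pn n = Pn n)
    (hsa : ∀ n, IsSelfAdjoint (Pn n))
    (hcomm : ∀ m n, Pn m ∘L Pn n = Pn n ∘L Pn m) :
    ∃ P : Set (ℕ → Bool) → (V →L[ℂ] V),
      (∀ X, MeasurableSet X → P X ∘L P X = P X) ∧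
      (∀ X, MeasurableSet X → IsSelfAdjoint (P X)) ∧
      (∀ X Y, MeasurableSet X → MeasurableSet Y → P X ∘L P Y = P Y ∘L P X) ∧
      P Set.univ = 1 ∧
      (∀ X, MeasurableSet X → P Xᶜ = 1 - P X) ∧
      (∀ X Y, MeasurableSet X → MeasurableSet Y → P (X ∩ Y) = P X ∘L P Y) ∧
      (∀ X : ℕ → Set (ℕ → Bool), (∀ n, MeasurableSet (X n)) →
        Pairwise (Function.onFun Disjoint X) → ∀ ψ : V,
        Tendsto (fun N => ∑ n ∈ Finset.range N, P (X n) ψ) atTop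
          (nhds (P (⋃ n, X n) ψ))) ∧
      (∀ n, P {f : ℕ → Bool | f n = true} = Pn n) := by
  classical
  set F : PVMAux.PFam V := ⟨Pn, hidem, hsa, hcomm⟩ with hF
  refine ⟨PVMAux.Pfin F, ?_, ?_, ?_, ?_, ?_, ?_, ?_, ?_⟩
  · intro X hX
    rw [← PVMAux.Pfin_inter F hX hX, Set.inter_self]
  · intro X hX
    exact PVMAux.Pfin_selfadjoint F hX
  · intro X Y hX hY
    rw [← PVMAux.Pfin_inter F hX hY, ← PVMAux.Pfin_inter F hY hX, Set.inter_comm]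
  · exact PVMAux.Pfin_univ F
  · intro X hX
    exact PVMAux.Pfin_compl F hX
  · intro X Y hX hY
    exact PVMAux.Pfin_inter F hX hY
  · intro X hX hdis ψ
    exact PVMAux.Pfin_sigma_additive F X hX hdis ψ
  · intro n
    exact PVMAux.Pfin_coord F n
end
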